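/- Let n ≥ 1, p > 1, let f : ℝ^n → ℝ be a C² function and let x₀ ∈ ℝ^n be a point with ∇f(x₀) ≠ 0. Define the vector fields F(y) = ‖∇f(y)‖^{p-2} ∇f(y) and G(y) = ‖∇(e^{-f})(y)‖^{p-2} ∇(e^{-f})(y), which are differentiable in a neighborhood of x₀. Then their divergences at x₀ satisfy div G (x₀) = -(e^{-f(x₀)})^{p-1} · ( div F (x₀) - (p-1) ‖∇f(x₀)‖^p ), where div H (x) = Σ_{i=1}^n ⟨ D H(x)(e_i), e_i ⟩ denotes the divergence computed from the Fréchet derivative D H(x) using the standard orthonormal basis (e_i) of ℝ^n. -/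

import Mathlib

open Real RealInnerProductSpace

/-- The divergence of a vector field on `ℝ^n`, computed from the Fréchet derivative
using the standard orthonormal basis. -/
noncomputable def ediv {n : ℕ} (H : EuclideanSpace ℝ (Fin n) → EuclideanSpace ℝ (Fin n))
    (x : EuclideanSpace ℝ (Fin n)) : ℝ :=
  ∑ i : Fin n, ⟪fderiv ℝ H x (EuclideanSpace.single i 1), EuclideanSpace.single i 1⟫

/-- The pointwise identity `-Δ_p(e^{-f}) = (e^{-f})^{p-1} [Δ_p f - (p-1)|∇f|^p]`
at a point where `∇f ≠ 0`, for a `C²` function `f`. -/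
theorem pLaplacian_exp_neg {n : ℕ} (hn : 1 ≤ n) (p : ℝ) (hp : 1 < p)
    (f : EuclideanSpace ℝ (Fin n) → ℝ) (hf : ContDiff ℝ 2 f)
    (x₀ : EuclideanSpace ℝ (Fin n)) (hx₀ : gradient f x₀ ≠ 0)
    (F G : EuclideanSpace ℝ (Fin n) → EuclideanSpace ℝ (Fin n))
    (hF : F = fun y => ‖gradient f y‖ ^ (p - 2) • gradient f y)
    (hG : G = fun y => ‖gradient (fun z => Real.exp (-f z)) y‖ ^ (p - 2) •
      gradient (fun z => Real.exp (-f z)) y) :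
    (∀ᶠ y in nhds x₀, DifferentiableAt ℝ F y ∧ DifferentiableAt ℝ G y) ∧
      ediv G x₀ = -(Real.exp (-f x₀)) ^ (p - 1) *
        (ediv F x₀ - (p - 1) * ‖gradient f x₀‖ ^ p) := by
  have hfd : Differentiable ℝ f := hf.differentiable (by norm_num)
  -- the gradient of f is C¹
  have hgc : ContDiff ℝ 1 (gradient f) :=
    ((InnerProductSpace.toDual ℝ (EuclideanSpace ℝ (Fin n))).symm.contDiff).comp
      (hf.fderiv_right (m := 1) (by norm_num))
  have hgd : Differentiable ℝ (gradient f) := hgc.differentiable (by norm_num)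
  -- derivative of exp(-f)
  have hE : ∀ y, HasFDerivAt (fun z => Real.exp (-f z))
      ((-Real.exp (-f y)) • fderiv ℝ f y) y := by
    intro y
    have h1 : HasFDerivAt (fun z => -f z) (-(fderiv ℝ f y)) y := (hfd y).hasFDerivAt.neg
    have h := (Real.hasDerivAt_exp (-f y)).comp_hasFDerivAt y h1
    simp only [smul_neg] at h
    rw [neg_smul]
    exact h
  -- gradient of exp(-f)
  have hgradexp : ∀ y, gradient (fun z => Real.exp (-f z)) y
      = (-Real.exp (-f y)) • gradient f y := by
    intro y
    show (InnerProductSpace.toDual ℝ _).symm (fderiv ℝ (fun z => Real.exp (-f z)) y) = _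
    rw [(hE y).fderiv, map_smul]
    rfl
  -- G = c • F with c y = -(exp(-f y))^(p-1)
  have hGc : G = fun y => (-(Real.exp (-f y)) ^ (p - 1)) • F y := by
    rw [hG, hF]
    funext y
    rw [hgradexp y, norm_smul]
    have hEpos : 0 < Real.exp (-f y) := Real.exp_pos _
    rw [Real.norm_eq_abs, abs_neg, abs_of_pos hEpos,
      Real.mul_rpow hEpos.le (norm_nonneg _), smul_smul, smul_smul]
    congr 1
    have h1 : Real.exp (-f y) ^ (p - 1) = Real.exp (-f y) ^ (p - 2) * Real.exp (-f y) := by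
      rw [show p - 1 = p - 2 + 1 by ring, Real.rpow_add_one hEpos.ne']
    rw [h1]; ring
  -- differentiability of F where gradient ≠ 0
  have hFdiff : ∀ y, gradient f y ≠ 0 → DifferentiableAt ℝ F y := by
    intro y hy
    rw [hF]
    exact (((hgd y).norm ℝ hy).rpow_const (Or.inl (norm_ne_zero_iff.2 hy))).smul (hgd y)
  -- differentiability of the scalar c
  have hcdiff : ∀ y, DifferentiableAt ℝ (fun z => -(Real.exp (-f z)) ^ (p - 1)) y := by
    intro y
    exact (((hE y).differentiableAt).rpow_const (Or.inl (Real.exp_pos _).ne')).neg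
  have hGdiff : ∀ y, gradient f y ≠ 0 → DifferentiableAt ℝ G y := by
    intro y hy
    rw [hGc]
    exact (hcdiff y).smul (hFdiff y hy)
  have hev : ∀ᶠ y in nhds x₀, gradient f y ≠ 0 :=
    (hgc.continuous.continuousAt).eventually_ne hx₀
  constructor
  · filter_upwards [hev] with y hy
    exact ⟨hFdiff y hy, hGdiff y hy⟩
  -- now the divergence identity
  set E₀ := Real.exp (-f x₀) with hE₀
  have hE₀pos : 0 < E₀ := Real.exp_pos _
  set g₀ := gradient f x₀ with hg₀
  have hF' : HasFDerivAt F (fderiv ℝ F x₀) x₀ := (hFdiff x₀ hx₀).hasFDerivAt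
  -- derivative of c at x₀
  have hc : HasFDerivAt (fun z => -(Real.exp (-f z)) ^ (p - 1))
      (((p - 1) * E₀ ^ (p - 1)) • fderiv ℝ f x₀) x₀ := by
    have h2 := (Real.hasDerivAt_rpow_const (x := E₀) (p := p - 1)
      (Or.inl hE₀pos.ne')).comp_hasFDerivAt x₀ (hE x₀)
    have h3 := h2.neg
    refine h3.congr_fderiv ?_
    symm
    rw [smul_smul, ← neg_smul]
    congr 1
    have h1 : E₀ ^ (p - 1) = E₀ ^ (p - 1 - 1) * E₀ := by
      rw [show p - 1 = p - 1 - 1 + 1 by ring, Real.rpow_add_one hE₀pos.ne']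
      ring_nf
    rw [h1]; ring
  have hG' : HasFDerivAt G ((-(E₀ ^ (p - 1))) • fderiv ℝ F x₀
      + (((p - 1) * E₀ ^ (p - 1)) • fderiv ℝ f x₀).smulRight (F x₀)) x₀ := by
    rw [hGc]
    exact hc.smul hF'
  have hf'i : ∀ v, fderiv ℝ f x₀ v = ⟪g₀, v⟫ := by
    intro v
    rw [hg₀]
    exact (InnerProductSpace.toDual_symm_apply).symm
  have key : ediv G x₀ = -(E₀ ^ (p - 1)) * ediv F x₀
      + (p - 1) * E₀ ^ (p - 1) * ⟪g₀, F x₀⟫ := by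
    unfold ediv
    rw [hG'.fderiv]
    have hsum : ⟪g₀, F x₀⟫ = ∑ i : Fin n,
        ⟪g₀, EuclideanSpace.single i 1⟫ * ⟪EuclideanSpace.single i 1, F x₀⟫ := by
      have h := (EuclideanSpace.basisFun (Fin n) ℝ).sum_inner_mul_inner g₀ (F x₀)
      simp only [EuclideanSpace.basisFun_apply] at h
      exact h.symm
    rw [hsum, Finset.mul_sum, Finset.mul_sum, ← Finset.sum_add_distrib]
    congr 1
    funext i
    simp only [ContinuousLinearMap.add_apply, ContinuousLinearMap.smul_apply,
      ContinuousLinearMap.smulRight_apply, inner_add_left, real_inner_smul_left,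
      smul_eq_mul, hf'i, real_inner_comm (F x₀)]
    ring
  have hinner : ⟪g₀, F x₀⟫ = ‖g₀‖ ^ p := by
    rw [hF]
    simp only
    rw [real_inner_smul_right, real_inner_self_eq_norm_sq,
      ← Real.rpow_natCast ‖g₀‖ 2, ← Real.rpow_add (norm_pos_iff.2 hx₀)]
    norm_num
  rw [key, hinner]
  ring
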